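/- Let G be a graph, k a nonnegative integer, and v ∈ V(G) a vertex through which there is a (k+1)-flower of θ_c minor-models (k+1 minor-models of θ_c pairwise sharing only the vertex v). Then G has a θ_c-hitting set of size at most k if and only if G \ {v} has a θ_c-hitting set of size at most k−1. -/

import Mathlib

/-- `G` contains θ_c (two vertices joined by `c` parallel edges) as a minor. -/
def HasThetaMinor {V : Type} (G : SimpleGraph V) (c : ℕ) : Prop :=
  ∃ A B : Set V, A.Nonempty ∧ B.Nonempty ∧ Disjoint A B ∧
    (G.induce A).Connected ∧ (G.induce B).Connected ∧
    ∃ E : Finset (V × V), E.card = c ∧ ∀ e ∈ E, e.1 ∈ A ∧ e.2 ∈ B ∧ G.Adj e.1 e.2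

lemma theta_mono {V W : Type} [DecidableEq W] {G : SimpleGraph V} {H : SimpleGraph W} {c : ℕ}
    (f : V → W) (hf : Function.Injective f)
    (hadj : ∀ a b, G.Adj a b → H.Adj (f a) (f b)) :
    HasThetaMinor G c → HasThetaMinor H c := by
  rintro ⟨A, B, hA, hB, hAB, hcA, hcB, E, hE, hEmem⟩
  refine ⟨f '' A, f '' B, hA.image f, hB.image f, ?_, ?_, ?_,
    E.image (Prod.map f f), ?_, ?_⟩
  · exact (Set.disjoint_image_iff hf).mpr hAB
  · refine SimpleGraph.Connected.map
      (G := G.induce A) (H := H.induce (f '' A))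
      ⟨fun a => ⟨f a, ⟨a, a.2, rfl⟩⟩, ?_⟩ ?_ hcA
    · intro a b hab
      exact hadj _ _ hab
    · rintro ⟨w, a, ha, rfl⟩
      exact ⟨⟨a, ha⟩, rfl⟩
  · refine SimpleGraph.Connected.map
      (G := G.induce B) (H := H.induce (f '' B))
      ⟨fun a => ⟨f a, ⟨a, a.2, rfl⟩⟩, ?_⟩ ?_ hcB
    · intro a b hab
      exact hadj _ _ hab
    · rintro ⟨w, a, ha, rfl⟩
      exact ⟨⟨a, ha⟩, rfl⟩
  · rw [Finset.card_image_of_injective _ (hf.prodMap hf), hE]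
  · rintro e he
    simp only [Finset.mem_image] at he
    obtain ⟨⟨a, b⟩, hab, rfl⟩ := he
    obtain ⟨h1, h2, h3⟩ := hEmem _ hab
    exact ⟨⟨a, h1, rfl⟩, ⟨b, h2, rfl⟩, hadj _ _ h3⟩

/-- Soundness of the Flower Rule: if a `(k+1)`-flower of θ_c minor-models passes
through `v`, then `G` has a θ_c-hitting set of size at most `k` iff `G \ {v}` has a
θ_c-hitting set of size at most `k - 1`. -/
theorem flower_rule {V : Type} [DecidableEq V] (G : SimpleGraph V) (c k : ℕ) (v : V)
    (M : Fin (k + 1) → G.Subgraph)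
    (hmm : ∀ i, HasThetaMinor (M i).coe c)
    (hv : ∀ i, v ∈ (M i).verts)
    (hflower : ∀ i j, i ≠ j → (M i).verts ∩ (M j).verts = {v}) :
    (∃ S : Finset V, S.card ≤ k ∧ ¬ HasThetaMinor (G.induce ((↑S : Set V)ᶜ)) c) ↔
    (∃ S' : Finset V, v ∉ S' ∧ (S'.card : ℤ) ≤ (k : ℤ) - 1 ∧
      ¬ HasThetaMinor (G.induce ((↑(insert v S') : Set V)ᶜ)) c) := by
  constructor
  · rintro ⟨S, hS, hmin⟩
    have hvS : v ∈ S := by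
      by_contra hvS
      have key : ∀ i, ∃ s ∈ S, s ∈ (M i).verts := by
        intro i
        by_contra h
        push_neg at h
        have hsub : (M i).verts ⊆ (↑S : Set V)ᶜ := fun x hx hxS => h x hxS hx
        apply hmin
        refine theta_mono
          (fun x : (M i).verts => (⟨x.1, hsub x.2⟩ : ((↑S : Set V)ᶜ : Set V)))
          (by intro a b hab; simpa [Subtype.ext_iff] using hab) ?_ (hmm i)
        intro a b hab
        exact ((M i).coe_adj a b).mp hab |>.adj_sub
      choose s hsS hsM using key
      have sinj : Function.Injective s := by
        intro i j hij
        by_contra hne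
        have hmem : s i ∈ (M i).verts ∩ (M j).verts := ⟨hsM i, hij ▸ hsM j⟩
        rw [hflower i j hne] at hmem
        exact hvS (hmem ▸ hsS i)
      have hle : k + 1 ≤ S.card := by
        have := Finset.card_le_card_of_injOn (s := Finset.univ) s (fun i _ => hsS i) sinj.injOn
        simpa using this
      omega
    refine ⟨S.erase v, Finset.notMem_erase _ _, ?_, ?_⟩
    · have h1 : (S.erase v).card = S.card - 1 := Finset.card_erase_of_mem hvS
      have h2 : 1 ≤ S.card := Finset.card_pos.mpr ⟨v, hvS⟩
      omega
    · rwa [Finset.insert_erase hvS]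
  · rintro ⟨S', hvS', hcard, hmin⟩
    refine ⟨insert v S', ?_, hmin⟩
    have := Finset.card_insert_of_notMem hvS'
    omega
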